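/- arXiv:1103.6128 — 5 statements merged into one kernel-verified Lean document; each statement's English description precedes it below -/
import Mathlib

section
/- Let a ∈ ℝ, let w₁ < w₂, and let r : ℝ → ℝ be continuously differentiable on [w₁, w₂] with 1 + a·r(w)² > 0 and r'(w)² ≤ 1 + a·r(w)² for all w ∈ [w₁, w₂]. Define r̄(w) = r(w)/√(1 + a·r(w)²) and z̄(w) = ∫_{w₁}^{w} √((1 + a·r(τ)² − r'(τ)²)/(1 + a·r(τ)²)³) dτ. Then for every w ∈ (w₁, w₂), z̄ is differentiable at w and r̄'(w)² + z̄'(w)² = 1/(1 + a·r(w)²)². -/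
open Real

/-- The geodesic deformation `(r̄, z̄)` of an arc-length profile `(r, z)` satisfies
`r̄'² + z̄'² = 1/(1 + a r²)²`, i.e. the deformed surface carries the metric
`ds̄² = dw²/(1+ar²)² + r² dσ²/(1+ar²)`. -/
theorem deformed_profile_metric
    (a w₁ w₂ : ℝ) (hw : w₁ < w₂)
    (r r' : ℝ → ℝ)
    (hr : ∀ w ∈ Set.Icc w₁ w₂, HasDerivAt r (r' w) w)
    (hr' : ContinuousOn r' (Set.Icc w₁ w₂))
    (hpos : ∀ w ∈ Set.Icc w₁ w₂, 1 + a * r w ^ 2 > 0)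
    (hle : ∀ w ∈ Set.Icc w₁ w₂, r' w ^ 2 ≤ 1 + a * r w ^ 2)
    (rbar zbar : ℝ → ℝ)
    (hrbar : rbar = fun w => r w / Real.sqrt (1 + a * r w ^ 2))
    (hzbar : zbar = fun w => ∫ τ in w₁..w,
      Real.sqrt ((1 + a * r τ ^ 2 - r' τ ^ 2) / (1 + a * r τ ^ 2) ^ 3)) :
    ∀ w ∈ Set.Ioo w₁ w₂, DifferentiableAt ℝ zbar w ∧
      deriv rbar w ^ 2 + deriv zbar w ^ 2 = 1 / (1 + a * r w ^ 2) ^ 2 := by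
  intro w hwmem
  have hwI : w ∈ Set.Icc w₁ w₂ := Set.Ioo_subset_Icc_self hwmem
  set P := 1 + a * r w ^ 2 with hP
  have hPpos : 0 < P := hpos w hwI
  have hsq : Real.sqrt P ^ 2 = P := Real.sq_sqrt hPpos.le
  have hsne : Real.sqrt P ≠ 0 := (Real.sqrt_pos.2 hPpos).ne'
  -- continuity of r on Icc
  have hrc : ContinuousOn r (Set.Icc w₁ w₂) := fun x hx =>
    ((hr x hx).continuousAt).continuousWithinAt
  -- integrand
  set f : ℝ → ℝ := fun τ =>
    Real.sqrt ((1 + a * r τ ^ 2 - r' τ ^ 2) / (1 + a * r τ ^ 2) ^ 3) with hf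
  have hfc : ContinuousOn f (Set.Icc w₁ w₂) := by
    apply ContinuousOn.sqrt
    apply ContinuousOn.div
    · exact (continuousOn_const.add (continuousOn_const.mul (hrc.pow 2))).sub (hr'.pow 2)
    · exact ((continuousOn_const.add (continuousOn_const.mul (hrc.pow 2))).pow 3)
    · intro x hx
      exact (pow_pos (hpos x hx) 3).ne'
  have hnhds : Set.Icc w₁ w₂ ∈ nhds w := Icc_mem_nhds hwmem.1 hwmem.2
  -- FTC
  have hint : IntervalIntegrable f MeasureTheory.volume w₁ w := by
    apply (hfc.mono ?_).intervalIntegrable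
    rw [Set.uIcc_of_le hwI.1]
    exact Set.Icc_subset_Icc le_rfl hwI.2
  have hmeas : StronglyMeasurableAtFilter f (nhds w) MeasureTheory.volume :=
    ⟨Set.Icc w₁ w₂, hnhds, hfc.aestronglyMeasurable measurableSet_Icc⟩
  have hcont : ContinuousAt f w := (hfc w hwI).continuousAt hnhds
  have hz : HasDerivAt zbar (f w) w := by
    rw [hzbar]
    exact intervalIntegral.integral_hasDerivAt_right hint hmeas hcont
  refine ⟨hz.differentiableAt, ?_⟩
  -- derivative of rbar
  have hrw : HasDerivAt r (r' w) w := hr w hwI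
  have hg : HasDerivAt (fun x => 1 + a * r x ^ 2) (a * (2 * r w * r' w)) w := by
    simpa using (((hrw.pow 2)).const_mul a).const_add (1:ℝ)
  have hgs : HasDerivAt (fun x => Real.sqrt (1 + a * r x ^ 2))
      (a * (2 * r w * r' w) / (2 * Real.sqrt P)) w := hg.sqrt hPpos.ne'
  have hrb : HasDerivAt rbar
      ((r' w * Real.sqrt P - r w * (a * (2 * r w * r' w) / (2 * Real.sqrt P))) /
        (Real.sqrt P) ^ 2) w := by
    rw [hrbar]
    exact hrw.div hgs hsne
  have hdz : deriv zbar w = f w := hz.deriv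
  have hdr : deriv rbar w =
      (r' w * Real.sqrt P - r w * (a * (2 * r w * r' w) / (2 * Real.sqrt P))) /
        (Real.sqrt P) ^ 2 := hrb.deriv
  have hfw2 : f w ^ 2 = (P - r' w ^ 2) / P ^ 3 := by
    rw [hf]
    exact Real.sq_sqrt (div_nonneg (by linarith [hle w hwI]) (pow_pos hPpos 3).le)
  rw [hdr, hdz, hfw2]
  have hone : P - a * r w ^ 2 = 1 := by rw [hP]; ring
  have h1 : ((r' w * Real.sqrt P - r w * (a * (2 * r w * r' w) / (2 * Real.sqrt P))) /
      (Real.sqrt P) ^ 2) ^ 2 = r' w ^ 2 / P ^ 3 := by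
    have hnum : r' w * Real.sqrt P - r w * (a * (2 * r w * r' w) / (2 * Real.sqrt P)) =
        r' w / Real.sqrt P := by
      have e : r' w * Real.sqrt P - r w * (a * (2 * r w * r' w) / (2 * Real.sqrt P)) =
          (r' w * Real.sqrt P ^ 2 - a * r w ^ 2 * r' w) / Real.sqrt P := by
        field_simp
      rw [e, hsq]
      congr 1
      linear_combination r' w * hone
    rw [hnum, hsq, div_div, div_pow, mul_pow, hsq]
    ring
  rw [h1]
  field_simp
  ring
end

section
/- Let k > 0 and a ∈ ℝ with 1 + a·k²·max(1, k²) > 0. For φ ∈ (0, π/2) let W(φ) = √(k²cos²φ + sin²φ), r(φ) = k·sin φ, define r̄(φ) = k·sin φ/√(1 + a·k²·sin²φ), z̄(φ) = ∫₀^φ √((1 + a·r(τ)² − (k·cos τ/W(τ))²)/(1 + a·r(τ)²)³)·W(τ) dτ, and the rescaled profile r̂(φ) = √(1 + a·k²)·r̄(φ), ẑ(φ) = √(1 + a·k²)·z̄(φ). Then for every φ ∈ (0, π/2), r̂'(φ) ≠ 0 and ẑ'(φ)/r̂'(φ) = (r̂(φ)/(k·√(k² − r̂(φ)²)))·√((1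 + a·k²·(k² − r̂(φ)²))/(1 + a·(k² − r̂(φ)²))). -/
open Real

set_option maxHeartbeats 1600000

/-- The rescaled meridian `(r̂, ẑ)` of the geodesically deformed ellipsoid satisfies the
differential equation
`dẑ/dr̂ = (r̂/(k√(k² − r̂²)))·√((1 + ak²(k² − r̂²))/(1 + a(k² − r̂²)))`. -/
theorem deformed_ellipsoid_meridian_ode
    (k a : ℝ) (hk : 0 < k) (ha : 1 + a * k ^ 2 * max 1 (k ^ 2) > 0)
    (W r rbar zbar rhat zhat : ℝ → ℝ)
    (hW : W = fun φ => Real.sqrt (k ^ 2 * Real.cos φ ^ 2 + Real.sin φ ^ 2))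
    (hr : r = fun φ => k * Real.sin φ)
    (hrbar : rbar = fun φ =>
      k * Real.sin φ / Real.sqrt (1 + a * k ^ 2 * Real.sin φ ^ 2))
    (hzbar : zbar = fun φ => ∫ τ in (0:ℝ)..φ,
      Real.sqrt ((1 + a * r τ ^ 2 - (k * Real.cos τ / W τ) ^ 2) /
        (1 + a * r τ ^ 2) ^ 3) * W τ)
    (hrhat : rhat = fun φ => Real.sqrt (1 + a * k ^ 2) * rbar φ)
    (hzhat : zhat = fun φ => Real.sqrt (1 + a * k ^ 2) * zbar φ) :
    ∀ φ ∈ Set.Ioo 0 (Real.pi / 2),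
      deriv rhat φ ≠ 0 ∧
      deriv zhat φ / deriv rhat φ =
        rhat φ / (k * Real.sqrt (k ^ 2 - rhat φ ^ 2)) *
          Real.sqrt ((1 + a * k ^ 2 * (k ^ 2 - rhat φ ^ 2)) /
            (1 + a * (k ^ 2 - rhat φ ^ 2))) := by
  have hK : (0:ℝ) < k ^ 2 := by positivity
  have hak : 0 < 1 + a * k ^ 2 := by
    rcases le_or_gt 0 a with h | h
    · nlinarith
    · have h1 : a * k ^ 2 ≤ 0 := by nlinarith
      have h2 : (1:ℝ) ≤ max 1 (k ^ 2) := le_max_left _ _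
      nlinarith [mul_nonneg (neg_nonneg.2 h1) (sub_nonneg.2 h2)]
  have hg : ∀ τ : ℝ, 0 < 1 + a * k ^ 2 * Real.sin τ ^ 2 := by
    intro τ
    rcases le_or_gt 0 a with h | h
    · nlinarith [mul_nonneg (mul_nonneg h hK.le) (sq_nonneg (Real.sin τ))]
    · have h1 : a * k ^ 2 ≤ 0 := by nlinarith
      have h2 : Real.sin τ ^ 2 ≤ 1 := Real.sin_sq_le_one τ
      nlinarith [mul_nonneg (neg_nonneg.2 h1) (sub_nonneg.2 h2)]
  have hW2pos : ∀ τ : ℝ, 0 < k ^ 2 * Real.cos τ ^ 2 + Real.sin τ ^ 2 := by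
    intro τ
    rcases eq_or_ne (Real.cos τ) 0 with h | h
    · have := Real.sin_sq_add_cos_sq τ
      rw [h]
      nlinarith
    · have : 0 < k ^ 2 * Real.cos τ ^ 2 := by positivity
      nlinarith [sq_nonneg (Real.sin τ)]
  have haW : ∀ τ : ℝ, 0 < 1 + a * k ^ 2 * (k ^ 2 * Real.cos τ ^ 2 + Real.sin τ ^ 2) := by
    intro τ
    rcases le_or_gt 0 a with h | h
    · nlinarith [mul_nonneg (mul_nonneg h hK.le) (hW2pos τ).le]
    · have h1 : a * k ^ 2 ≤ 0 := by nlinarith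
      have hle : k ^ 2 * Real.cos τ ^ 2 + Real.sin τ ^ 2 ≤ max 1 (k ^ 2) := by
        have hm : max 1 (k ^ 2) * (Real.sin τ ^ 2 + Real.cos τ ^ 2) = max 1 (k ^ 2) := by
          rw [Real.sin_sq_add_cos_sq]; ring
        nlinarith [hm,
          mul_nonneg (sub_nonneg.2 (le_max_right (1:ℝ) (k ^ 2))) (sq_nonneg (Real.cos τ)),
          mul_nonneg (sub_nonneg.2 (le_max_left (1:ℝ) (k ^ 2))) (sq_nonneg (Real.sin τ))]
      nlinarith [mul_nonneg (neg_nonneg.2 h1) (sub_nonneg.2 hle)]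
  have hg' : ∀ τ : ℝ, (0:ℝ) < 1 + a * (k * Real.sin τ) ^ 2 := by
    intro τ
    have := hg τ
    nlinarith [sq_nonneg (k * Real.sin τ)]
  -- the integrand
  set F : ℝ → ℝ := fun τ =>
    Real.sqrt ((1 + a * (k * Real.sin τ) ^ 2 -
        (k * Real.cos τ / Real.sqrt (k ^ 2 * Real.cos τ ^ 2 + Real.sin τ ^ 2)) ^ 2) /
      (1 + a * (k * Real.sin τ) ^ 2) ^ 3) *
      Real.sqrt (k ^ 2 * Real.cos τ ^ 2 + Real.sin τ ^ 2) with hF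
  have Hrhat : rhat = fun x =>
      Real.sqrt (1 + a * k ^ 2) * (k * Real.sin x / Real.sqrt (1 + a * k ^ 2 * Real.sin x ^ 2)) := by
    simp only [hrhat, hrbar]
  have Hzhat : zhat = fun x => Real.sqrt (1 + a * k ^ 2) * ∫ τ in (0:ℝ)..x, F τ := by
    simp only [hzhat, hzbar, hr, hW, hF]
  have hFc : Continuous F := by
    apply Continuous.mul
    · apply Continuous.sqrt
      apply Continuous.div
      · exact (continuous_const.add (continuous_const.mul
          ((continuous_const.mul Real.continuous_sin).pow 2))).sub
          (((continuous_const.mul Real.continuous_cos).div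
            (((continuous_const.mul (Real.continuous_cos.pow 2)).add
              (Real.continuous_sin.pow 2)).sqrt)
            (fun τ => (Real.sqrt_pos.2 (hW2pos τ)).ne')).pow 2)
      · exact (continuous_const.add (continuous_const.mul
          ((continuous_const.mul Real.continuous_sin).pow 2))).pow 3
      · intro τ
        exact pow_ne_zero _ (hg' τ).ne'
    · exact (((continuous_const.mul (Real.continuous_cos.pow 2)).add
        (Real.continuous_sin.pow 2)).sqrt)
  intro φ hφ
  have hpi := Real.pi_pos
  have hs : 0 < Real.sin φ := Real.sin_pos_of_pos_of_lt_pi hφ.1 (by linarith [hφ.2])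
  have hc : 0 < Real.cos φ := Real.cos_pos_of_mem_Ioo ⟨by linarith [hφ.1], hφ.2⟩
  have hgφ : 0 < 1 + a * k ^ 2 * Real.sin φ ^ 2 := hg φ
  have hsg : 0 < Real.sqrt (1 + a * k ^ 2 * Real.sin φ ^ 2) := Real.sqrt_pos.2 hgφ
  have hsg2 : Real.sqrt (1 + a * k ^ 2 * Real.sin φ ^ 2) ^ 2 = 1 + a * k ^ 2 * Real.sin φ ^ 2 :=
    Real.sq_sqrt hgφ.le
  have hW2 : 0 < k ^ 2 * Real.cos φ ^ 2 + Real.sin φ ^ 2 := hW2pos φ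
  have hsW : 0 < Real.sqrt (k ^ 2 * Real.cos φ ^ 2 + Real.sin φ ^ 2) := Real.sqrt_pos.2 hW2
  have hsW2 : Real.sqrt (k ^ 2 * Real.cos φ ^ 2 + Real.sin φ ^ 2) ^ 2
      = k ^ 2 * Real.cos φ ^ 2 + Real.sin φ ^ 2 := Real.sq_sqrt hW2.le
  have hM : 0 < 1 + a * k ^ 2 * (k ^ 2 * Real.cos φ ^ 2 + Real.sin φ ^ 2) := haW φ
  have hsM : 0 < Real.sqrt (1 + a * k ^ 2 * (k ^ 2 * Real.cos φ ^ 2 + Real.sin φ ^ 2)) :=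
    Real.sqrt_pos.2 hM
  have hsA : 0 < Real.sqrt (1 + a * k ^ 2) := Real.sqrt_pos.2 hak
  have hsA2 : Real.sqrt (1 + a * k ^ 2) ^ 2 = 1 + a * k ^ 2 := Real.sq_sqrt hak.le
  have hpyth := Real.sin_sq_add_cos_sq φ
  -- derivative of rbar
  have hu : HasDerivAt (fun x => 1 + a * k ^ 2 * Real.sin x ^ 2)
      (a * k ^ 2 * (2 * Real.sin φ * Real.cos φ)) φ := by
    have h1 := (((Real.hasDerivAt_sin φ).pow 2).const_mul (a * k ^ 2)).const_add 1
    exact h1.congr_deriv (by push_cast; ring)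
  have hq := hu.sqrt hgφ.ne'
  have hnum : HasDerivAt (fun x => k * Real.sin x) (k * Real.cos φ) φ :=
    (Real.hasDerivAt_sin φ).const_mul k
  have hrb := hnum.div hq hsg.ne'
  have key : k * Real.cos φ * Real.sqrt (1 + a * k ^ 2 * Real.sin φ ^ 2) -
      k * Real.sin φ * (a * k ^ 2 * (2 * Real.sin φ * Real.cos φ) /
        (2 * Real.sqrt (1 + a * k ^ 2 * Real.sin φ ^ 2))) =
      k * Real.cos φ / Real.sqrt (1 + a * k ^ 2 * Real.sin φ ^ 2) := by
    generalize Real.sqrt (1 + a * k ^ 2 * Real.sin φ ^ 2) = q at hsg hsg2 ⊢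
    rw [eq_div_iff hsg.ne']
    field_simp
    linear_combination hsg2
  have hrb' : HasDerivAt (fun x => k * Real.sin x / Real.sqrt (1 + a * k ^ 2 * Real.sin x ^ 2))
      (k * Real.cos φ /
        ((1 + a * k ^ 2 * Real.sin φ ^ 2) * Real.sqrt (1 + a * k ^ 2 * Real.sin φ ^ 2))) φ := by
    rw [key, hsg2] at hrb
    exact hrb.congr_deriv (by rw [div_div]; ring_nf)
  have hrhatD : HasDerivAt rhat
      (Real.sqrt (1 + a * k ^ 2) * (k * Real.cos φ /
        ((1 + a * k ^ 2 * Real.sin φ ^ 2) * Real.sqrt (1 + a * k ^ 2 * Real.sin φ ^ 2)))) φ := by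
    rw [Hrhat]; exact hrb'.const_mul _
  have hzD : HasDerivAt (fun x => ∫ τ in (0:ℝ)..x, F τ) (F φ) φ :=
    (hFc.integral_hasStrictDerivAt 0 φ).hasDerivAt
  have hzhatD : HasDerivAt zhat (Real.sqrt (1 + a * k ^ 2) * F φ) φ := by
    rw [Hzhat]; exact hzD.const_mul _
  have hDpos : 0 < k * Real.cos φ /
      ((1 + a * k ^ 2 * Real.sin φ ^ 2) * Real.sqrt (1 + a * k ^ 2 * Real.sin φ ^ 2)) := by
    positivity
  -- value of F at φ
  have hFφ : F φ = Real.sin φ *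
      Real.sqrt (1 + a * k ^ 2 * (k ^ 2 * Real.cos φ ^ 2 + Real.sin φ ^ 2)) /
      ((1 + a * k ^ 2 * Real.sin φ ^ 2) * Real.sqrt (1 + a * k ^ 2 * Real.sin φ ^ 2)) := by
    have hgg : 1 + a * (k * Real.sin φ) ^ 2 = 1 + a * k ^ 2 * Real.sin φ ^ 2 := by ring
    have step : F φ = Real.sqrt ((1 + a * k ^ 2 * Real.sin φ ^ 2 -
        (k * Real.cos φ / Real.sqrt (k ^ 2 * Real.cos φ ^ 2 + Real.sin φ ^ 2)) ^ 2) /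
        (1 + a * k ^ 2 * Real.sin φ ^ 2) ^ 3) *
        Real.sqrt (k ^ 2 * Real.cos φ ^ 2 + Real.sin φ ^ 2) := by
      simp only [hF]
      rw [hgg]
    rw [step]
    have n1 : 1 + a * k ^ 2 * Real.sin φ ^ 2 -
        (k * Real.cos φ / Real.sqrt (k ^ 2 * Real.cos φ ^ 2 + Real.sin φ ^ 2)) ^ 2 =
        Real.sin φ ^ 2 * (1 + a * k ^ 2 * (k ^ 2 * Real.cos φ ^ 2 + Real.sin φ ^ 2)) /
          (k ^ 2 * Real.cos φ ^ 2 + Real.sin φ ^ 2) := by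
      rw [div_pow, hsW2]
      field_simp
      ring
    rw [n1]
    have e1 : Real.sin φ ^ 2 * (1 + a * k ^ 2 * (k ^ 2 * Real.cos φ ^ 2 + Real.sin φ ^ 2)) /
          (k ^ 2 * Real.cos φ ^ 2 + Real.sin φ ^ 2) / (1 + a * k ^ 2 * Real.sin φ ^ 2) ^ 3 =
        (Real.sin φ * Real.sqrt (1 + a * k ^ 2 * (k ^ 2 * Real.cos φ ^ 2 + Real.sin φ ^ 2)) /
          (Real.sqrt (k ^ 2 * Real.cos φ ^ 2 + Real.sin φ ^ 2) *
            ((1 + a * k ^ 2 * Real.sin φ ^ 2) *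
              Real.sqrt (1 + a * k ^ 2 * Real.sin φ ^ 2)))) ^ 2 := by
      rw [div_pow, mul_pow, mul_pow, mul_pow, hsW2, hsg2, Real.sq_sqrt hM.le]
      field_simp
      try ring
      try exact Or.inl trivial
      try tauto
    rw [e1, Real.sqrt_sq (div_nonneg (mul_nonneg hs.le hsM.le)
      (mul_nonneg hsW.le (mul_nonneg hgφ.le hsg.le)))]
    field_simp
  refine ⟨?_, ?_⟩
  · rw [hrhatD.deriv]
    exact (mul_pos hsA hDpos).ne'
  · rw [hzhatD.deriv, hrhatD.deriv, mul_div_mul_left _ _ hsA.ne']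
    have hRval : rhat φ = Real.sqrt (1 + a * k ^ 2) *
        (k * Real.sin φ / Real.sqrt (1 + a * k ^ 2 * Real.sin φ ^ 2)) := by rw [Hrhat]
    have hK2 : k ^ 2 - rhat φ ^ 2 = k ^ 2 * Real.cos φ ^ 2 / (1 + a * k ^ 2 * Real.sin φ ^ 2) := by
      rw [hRval, mul_pow, div_pow, mul_pow, hsA2, hsg2]
      field_simp
      have hne : (1 + k ^ 2 * a * Real.sin φ ^ 2) ≠ 0 := by nlinarith
      field_simp
      nlinarith [hpyth, hgφ]
    have hsqK2 : Real.sqrt (k ^ 2 - rhat φ ^ 2) =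
        k * Real.cos φ / Real.sqrt (1 + a * k ^ 2 * Real.sin φ ^ 2) := by
      rw [hK2, show k ^ 2 * Real.cos φ ^ 2 / (1 + a * k ^ 2 * Real.sin φ ^ 2) =
        (k * Real.cos φ / Real.sqrt (1 + a * k ^ 2 * Real.sin φ ^ 2)) ^ 2 by
          rw [div_pow, mul_pow, hsg2], Real.sqrt_sq (by positivity)]
    have hBdiv : (1 + a * k ^ 2 * (k ^ 2 - rhat φ ^ 2)) / (1 + a * (k ^ 2 - rhat φ ^ 2)) =
        (1 + a * k ^ 2 * (k ^ 2 * Real.cos φ ^ 2 + Real.sin φ ^ 2)) / (1 + a * k ^ 2) := by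
      have hB1 : 1 + a * k ^ 2 * (k ^ 2 - rhat φ ^ 2) =
          (1 + a * k ^ 2 * (k ^ 2 * Real.cos φ ^ 2 + Real.sin φ ^ 2)) /
            (1 + a * k ^ 2 * Real.sin φ ^ 2) := by
        rw [hK2]; field_simp; ring
      have hB2 : 1 + a * (k ^ 2 - rhat φ ^ 2) =
          (1 + a * k ^ 2) / (1 + a * k ^ 2 * Real.sin φ ^ 2) := by
        rw [hK2]; field_simp; nlinarith [hpyth]
      rw [hB1, hB2]
      field_simp
    have hsqB : Real.sqrt ((1 + a * k ^ 2 * (k ^ 2 - rhat φ ^ 2)) /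
        (1 + a * (k ^ 2 - rhat φ ^ 2))) =
        Real.sqrt (1 + a * k ^ 2 * (k ^ 2 * Real.cos φ ^ 2 + Real.sin φ ^ 2)) /
          Real.sqrt (1 + a * k ^ 2) := by
      rw [hBdiv, Real.sqrt_div hM.le]
    rw [hFφ, hsqK2, hsqB, hRval]
    field_simp
    ring_nf
    have hq' : 0 < Real.sqrt (1 + Real.sin φ ^ 2 * a * k ^ 2) := by
      rw [show 1 + Real.sin φ ^ 2 * a * k ^ 2 = 1 + a * k ^ 2 * Real.sin φ ^ 2 by ring]; exact hsg
    have hY : Real.sin φ ^ 2 * a * k ^ 2 * Real.sqrt (1 + Real.sin φ ^ 2 * a * k ^ 2) +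
        Real.sqrt (1 + Real.sin φ ^ 2 * a * k ^ 2) ≠ 0 := by
      rw [show Real.sin φ ^ 2 * a * k ^ 2 * Real.sqrt (1 + Real.sin φ ^ 2 * a * k ^ 2) +
        Real.sqrt (1 + Real.sin φ ^ 2 * a * k ^ 2) = (1 + a * k ^ 2 * Real.sin φ ^ 2) *
        Real.sqrt (1 + Real.sin φ ^ 2 * a * k ^ 2) by ring]
      positivity
    rw [← add_mul, mul_inv_cancel₀ hY, mul_inv_cancel₀ hq'.ne']
end

section
/- Let k > 0, a ∈ ℝ with 1 + a·k² > 0, and r ∈ ℝ with 0 < r < k and 1 + a·r² > 0. Define ρ(r) = r·√((1 + a·k²)/(1 + a·r²)) and M(ρ) = (k² + a·k⁴ + (1/k² − a·k² − 1)·ρ²)/((k² − ρ²)·(1 + a·k² − a·ρ²)). Then ρ is differentiable at r with ρ'(r) = √(1 + a·k²)/(1 + a·r²)^{3/2}, one has 0 < ρ(r)² < k² and 1 + a·k² − a·ρ(r)² > 0, and M(ρ(r))·ρ'(r)² = (1 + a·k²)·(k² + (1/k² − 1)·r²)/((k² − r²)·(1 + a·r²)²), while ρ(r)² = (1 + a·k²)·r²/(1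 + a·r²). -/
open Real

/-- Pulling back the metric `M(r̂) dr̂² + r̂² dσ²` of the deformed ellipsoid to the original
ellipsoid via the substitution `r̂ = ρ(r) = r√((1 + ak²)/(1 + ar²))` gives the radial
coefficient `(1 + ak²)(k² + (1/k² − 1)r²)/((k² − r²)(1 + ar²)²)` and the angular
coefficient `ρ(r)² = (1 + ak²) r²/(1 + ar²)`. -/
theorem deformed_metric_pullback
    (k a r : ℝ) (hk : 0 < k) (hak : 1 + a * k ^ 2 > 0)
    (hr₀ : 0 < r) (hrk : r < k) (har : 1 + a * r ^ 2 > 0)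
    (ρ : ℝ → ℝ) (M : ℝ → ℝ)
    (hρ : ρ = fun t => t * Real.sqrt ((1 + a * k ^ 2) / (1 + a * t ^ 2)))
    (hM : M = fun t => (k ^ 2 + a * k ^ 4 + (1 / k ^ 2 - a * k ^ 2 - 1) * t ^ 2) /
      ((k ^ 2 - t ^ 2) * (1 + a * k ^ 2 - a * t ^ 2))) :
    HasDerivAt ρ (Real.sqrt (1 + a * k ^ 2) / (1 + a * r ^ 2) ^ ((3 : ℝ) / 2)) r ∧
    0 < ρ r ^ 2 ∧ ρ r ^ 2 < k ^ 2 ∧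
    1 + a * k ^ 2 - a * ρ r ^ 2 > 0 ∧
    M (ρ r) * deriv ρ r ^ 2 =
      (1 + a * k ^ 2) * (k ^ 2 + (1 / k ^ 2 - 1) * r ^ 2) /
        ((k ^ 2 - r ^ 2) * (1 + a * r ^ 2) ^ 2) ∧
    ρ r ^ 2 = (1 + a * k ^ 2) * r ^ 2 / (1 + a * r ^ 2) := by
  set C := 1 + a * k ^ 2 with hCdef
  set D := 1 + a * r ^ 2 with hDdef
  have hC : 0 < C := hak
  have hD : 0 < D := har
  have hs : 0 < Real.sqrt D := Real.sqrt_pos.mpr hD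
  have hs2 : Real.sqrt D ^ 2 = D := Real.sq_sqrt hD.le
  have hD32 : D ^ ((3 : ℝ) / 2) = D * Real.sqrt D := by
    rw [show ((3 : ℝ) / 2) = 1 + 1 / 2 by norm_num, Real.rpow_add hD, Real.rpow_one,
      ← Real.sqrt_eq_rpow]
  -- derivative
  have h1 : HasDerivAt (fun t : ℝ => 1 + a * t ^ 2) (2 * a * r) r := by
    have := ((hasDerivAt_pow 2 r).const_mul a).const_add 1
    refine this.congr_deriv ?_
    simp; ring
  have h2 : HasDerivAt (fun t : ℝ => Real.sqrt (1 + a * t ^ 2))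
      (2 * a * r / (2 * Real.sqrt D)) r := h1.sqrt (ne_of_gt hD)
  have h3 : HasDerivAt (fun t : ℝ => t / Real.sqrt (1 + a * t ^ 2))
      ((1 * Real.sqrt D - r * (2 * a * r / (2 * Real.sqrt D))) / Real.sqrt D ^ 2) r :=
    (hasDerivAt_id r).div h2 (ne_of_gt hs)
  have h4 := h3.const_mul (Real.sqrt C)
  have hfun : ρ = fun t => Real.sqrt C * (t / Real.sqrt (1 + a * t ^ 2)) := by
    funext t
    rw [hρ]
    show t * Real.sqrt (C / (1 + a * t ^ 2)) = _
    rw [Real.sqrt_div hC.le]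
    ring
  have hd : HasDerivAt ρ (Real.sqrt C / D ^ ((3 : ℝ) / 2)) r := by
    rw [hfun]
    refine h4.congr_deriv ?_
    rw [hD32]
    field_simp
    linear_combination (D - 1) * hs2 + D * hDdef
  have hρr2 : ρ r ^ 2 = C * r ^ 2 / D := by
    rw [hρ]
    simp only
    rw [mul_pow, Real.sq_sqrt (div_nonneg hC.le hD.le)]
    ring
  have hkr : 0 < k ^ 2 - r ^ 2 := by nlinarith
  refine ⟨hd, ?_, ?_, ?_, ?_, ?_⟩
  · rw [hρr2]; positivity
  · rw [hρr2]
    rw [div_lt_iff₀ hD]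
    nlinarith
  · rw [hρr2]
    have : C - a * (C * r ^ 2 / D) = C / D := by field_simp; ring
    have h := this
    nlinarith [div_pos hC hD]
  · have hderiv : deriv ρ r = Real.sqrt C / D ^ ((3 : ℝ) / 2) := hd.deriv
    have hd2 : deriv ρ r ^ 2 = C / D ^ 3 := by
      rw [hderiv, div_pow, Real.sq_sqrt hC.le, hD32, mul_pow, hs2]
      ring
    rw [hM]
    simp only
    rw [hρr2, hd2]
    have e1 : k ^ 2 - C * r ^ 2 / D = (k ^ 2 - r ^ 2) / D := by
      field_simp
      rw [hCdef, hDdef]; ring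
    have e2 : C - a * (C * r ^ 2 / D) = C / D := by
      field_simp
      rw [hDdef]; ring
    have e3 : k ^ 2 + a * k ^ 4 + (1 / k ^ 2 - a * k ^ 2 - 1) * (C * r ^ 2 / D) =
        C * (k ^ 2 + (1 / k ^ 2 - 1) * r ^ 2) / D := by
      field_simp
      rw [hCdef, hDdef]; ring
    rw [e1, e2, e3]
    field_simp
  · rw [hρr2]
end

section
/- Let a > −1. Define r̄(w) = sin w/√(1 + a·sin²w) and z̄(w) = ∫₀^w (√(1 + a)·sin τ/(1 + a·sin²τ)^{3/2}) dτ for w ∈ [0, π]. Then for every w ∈ [0, π], r̄(w)² + (1/√(1 + a) − z̄(w))² = 1/(1 + a); i.e. the geodesic deformation of the unit sphere is again a sphere, of radius 1/√(1 + a). -/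
open Real

lemma upos (a : ℝ) (ha : a > -1) (τ : ℝ) : 0 < 1 + a * Real.sin τ ^ 2 := by
  rcases le_or_gt 0 a with h | h
  · nlinarith [sq_nonneg (Real.sin τ)]
  · nlinarith [Real.sin_sq_le_one τ, sq_nonneg (Real.sin τ)]

lemma key_deriv (a : ℝ) (ha : a > -1) (τ : ℝ) :
    HasDerivAt (fun t => (1 / Real.sqrt (1 + a)) * (1 - Real.cos t / Real.sqrt (1 + a * Real.sin t ^ 2)))
      (Real.sqrt (1 + a) * Real.sin τ / (1 + a * Real.sin τ ^ 2) ^ ((3 : ℝ) / 2)) τ := by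
  have hA : (0:ℝ) < 1 + a := by linarith
  have hu : 0 < 1 + a * Real.sin τ ^ 2 := upos a ha τ
  have hsu : 0 < Real.sqrt (1 + a * Real.sin τ ^ 2) := Real.sqrt_pos.mpr hu
  have h1 : HasDerivAt (fun t => 1 + a * Real.sin t ^ 2)
      (a * (2 * Real.sin τ * Real.cos τ)) τ := by
    have := ((Real.hasDerivAt_sin τ).pow 2).const_mul a
    simpa [mul_comm, mul_assoc, mul_left_comm] using this.const_add 1
  have h2 : HasDerivAt (fun t => Real.sqrt (1 + a * Real.sin t ^ 2))
      (a * (2 * Real.sin τ * Real.cos τ) / (2 * Real.sqrt (1 + a * Real.sin τ ^ 2))) τ := by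
    have := (Real.hasDerivAt_sqrt hu.ne').comp τ h1
    simpa [Function.comp_def, div_eq_mul_inv, mul_comm] using this
  have h3 : HasDerivAt (fun t => Real.cos t / Real.sqrt (1 + a * Real.sin t ^ 2))
      ((-Real.sin τ * Real.sqrt (1 + a * Real.sin τ ^ 2) -
        Real.cos τ * (a * (2 * Real.sin τ * Real.cos τ) / (2 * Real.sqrt (1 + a * Real.sin τ ^ 2)))) /
        Real.sqrt (1 + a * Real.sin τ ^ 2) ^ 2) τ :=
    (Real.hasDerivAt_cos τ).div h2 hsu.ne'
  have h4 := (h3.const_mul (1 / Real.sqrt (1 + a))).const_sub 1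
  have h5 := h4.const_mul (1 / Real.sqrt (1 + a))
  have h6 : HasDerivAt (fun t => (1 / Real.sqrt (1 + a)) * (1 - Real.cos t / Real.sqrt (1 + a * Real.sin t ^ 2)))
      ((1 / Real.sqrt (1 + a)) * (-((-Real.sin τ * Real.sqrt (1 + a * Real.sin τ ^ 2) -
        Real.cos τ * (a * (2 * Real.sin τ * Real.cos τ) / (2 * Real.sqrt (1 + a * Real.sin τ ^ 2)))) /
        Real.sqrt (1 + a * Real.sin τ ^ 2) ^ 2))) τ := (h3.const_sub 1).const_mul _
  convert h6 using 1
  have hsq : Real.sqrt (1 + a * Real.sin τ ^ 2) ^ 2 = 1 + a * Real.sin τ ^ 2 := Real.sq_sqrt hu.le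
  have hrpow : (1 + a * Real.sin τ ^ 2) ^ ((3:ℝ)/2)
      = (1 + a * Real.sin τ ^ 2) * Real.sqrt (1 + a * Real.sin τ ^ 2) := by
    rw [show (3:ℝ)/2 = 1 + 1/2 by norm_num, Real.rpow_add hu, Real.rpow_one,
      ← Real.sqrt_eq_rpow]
  have hAsq : Real.sqrt (1 + a) ^ 2 = 1 + a := Real.sq_sqrt hA.le
  have hsA : (0:ℝ) < Real.sqrt (1 + a) := Real.sqrt_pos.mpr hA
  rw [hrpow]
  have hpyth : Real.sin τ ^ 2 + Real.cos τ ^ 2 = 1 := Real.sin_sq_add_cos_sq τ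
  field_simp
  linear_combination (Real.sin τ*Real.sqrt (1+a*Real.sin τ^2)^2)*hAsq
    + (a*Real.sin τ*(1-Real.sin τ^2))*hsq
    + (-a*Real.sin τ*(1+a*Real.sin τ^2))*hpyth

/-- The geodesic deformation of the unit sphere is again a sphere, of radius
`1/√(1 + a)`: the deformed meridian `(r̄, z̄)` lies on the circle of radius `1/√(1 + a)`
centered at height `1/√(1 + a)`. -/
theorem deformed_sphere_is_sphere
    (a : ℝ) (ha : a > -1)
    (rbar zbar : ℝ → ℝ)
    (hrbar : rbar = fun w => Real.sin w / Real.sqrt (1 + a * Real.sin w ^ 2))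
    (hzbar : zbar = fun w => ∫ τ in (0:ℝ)..w,
      Real.sqrt (1 + a) * Real.sin τ / (1 + a * Real.sin τ ^ 2) ^ ((3 : ℝ) / 2)) :
    ∀ w ∈ Set.Icc 0 Real.pi,
      rbar w ^ 2 + (1 / Real.sqrt (1 + a) - zbar w) ^ 2 = 1 / (1 + a) := by
  intro w hw
  have hA : (0:ℝ) < 1 + a := by linarith
  have hsA : (0:ℝ) < Real.sqrt (1 + a) := Real.sqrt_pos.mpr hA
  have hcont : Continuous (fun τ : ℝ =>
      Real.sqrt (1 + a) * Real.sin τ / (1 + a * Real.sin τ ^ 2) ^ ((3 : ℝ) / 2)) := by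
    apply Continuous.div
    · exact continuous_const.mul Real.continuous_sin
    · exact (continuous_const.add (continuous_const.mul (Real.continuous_sin.pow 2))).rpow_const
        (fun x => Or.inr (by norm_num))
    · intro x
      exact (Real.rpow_pos_of_pos (upos a ha x) _).ne'
  have hint : zbar w = (1 / Real.sqrt (1 + a)) * (1 - Real.cos w / Real.sqrt (1 + a * Real.sin w ^ 2))
      - (1 / Real.sqrt (1 + a)) * (1 - Real.cos 0 / Real.sqrt (1 + a * Real.sin 0 ^ 2)) := by
    rw [hzbar]
    exact intervalIntegral.integral_eq_sub_of_hasDerivAt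
      (fun τ _ => key_deriv a ha τ) (hcont.intervalIntegrable 0 w)
  have hu : 0 < 1 + a * Real.sin w ^ 2 := upos a ha w
  have hsu : 0 < Real.sqrt (1 + a * Real.sin w ^ 2) := Real.sqrt_pos.mpr hu
  have hsq : Real.sqrt (1 + a * Real.sin w ^ 2) ^ 2 = 1 + a * Real.sin w ^ 2 := Real.sq_sqrt hu.le
  have hAsq : Real.sqrt (1 + a) ^ 2 = 1 + a := Real.sq_sqrt hA.le
  have hpyth : Real.sin w ^ 2 + Real.cos w ^ 2 = 1 := Real.sin_sq_add_cos_sq w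
  simp only [Real.sin_zero, Real.cos_zero] at hint
  norm_num at hint
  rw [hrbar, hint]
  beta_reduce
  generalize Real.sqrt (1 + a * Real.sin w ^ 2) = S at hsu hsq
  generalize Real.sqrt (1 + a) = T at hsA hAsq
  field_simp
  rw [hsq, hAsq]
  linear_combination (1+a)*hpyth
end

section
/- Let k > 0 and 0 < r₀ < k, and for a in a neighbourhood of 0 define Z(a) = ∫₀^{r₀} (t/(k·√(k² − t²)))·√((1 + a·k²·(k² − t²))/(1 + a·(k² − t²))) dt. Then Z(0) = 1 − √(k² − r₀²)/k and Z has derivative at a = 0 equal to −k²·(1 − k²)/6 + ((1 − k²)/(6·k))·(k² − r₀²)^{3/2}. -/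
open Real MeasureTheory intervalIntegral

set_option maxHeartbeats 800000

lemma aux_bounds (k u x : ℝ) (hk : 0 < k) (hu : 0 < u) (huk : u ≤ k^2)
    (hx : |x| < 1/(2*(1+k^2)^2)) :
    1/2 ≤ 1 + x*u ∧ 1 + x*u ≤ 2 ∧ 1/2 ≤ 1 + x*(k^2*u) ∧ 1 + x*(k^2*u) ≤ 2 := by
  have hc1 : (1/(2*(1+k^2)^2)) * k^2 ≤ 1/2 := by
    rw [div_mul_eq_mul_div, div_le_div_iff₀ (by positivity) two_pos]
    nlinarith [sq_nonneg k, sq_nonneg (k^2)]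
  have hc2 : (1/(2*(1+k^2)^2)) * (k^2*k^2) ≤ 1/2 := by
    rw [div_mul_eq_mul_div, div_le_div_iff₀ (by positivity) two_pos]
    nlinarith [sq_nonneg k, sq_nonneg (k^2), sq_nonneg (1-k^2)]
  have b1 : |x*u| ≤ 1/2 := by
    rw [abs_mul, abs_of_pos hu]
    have := mul_le_mul hx.le huk hu.le (by positivity : (0:ℝ) ≤ 1/(2*(1+k^2)^2))
    linarith
  have b2 : |x*(k^2*u)| ≤ 1/2 := by
    rw [abs_mul, abs_of_pos (by positivity : (0:ℝ) < k^2*u)]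
    have := mul_le_mul hx.le (mul_le_mul_of_nonneg_left huk (sq_nonneg k))
      (by positivity) (by positivity : (0:ℝ) ≤ 1/(2*(1+k^2)^2))
    linarith
  have n1 := neg_abs_le (x*u); have p1 := le_abs_self (x*u)
  have n2 := neg_abs_le (x*(k^2*u)); have p2 := le_abs_self (x*(k^2*u))
  exact ⟨by linarith, by linarith, by linarith, by linarith⟩

/-- Linear approximation in the deformation parameter `a` of the meridian height
`Z(a) = ∫₀^{r₀} (t/(k√(k² − t²)))·√((1 + ak²(k² − t²))/(1 + a(k² − t²))) dt` of the
deformed ellipsoid: `Z(0) = 1 − √(k² − r₀²)/k` and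
`Z'(0) = −k²(1 − k²)/6 + ((1 − k²)/(6k))(k² − r₀²)^{3/2}`. -/
theorem deformed_meridian_linear_approximation
    (k r₀ : ℝ) (hk : 0 < k) (hr₀ : 0 < r₀) (hr₀k : r₀ < k)
    (Z : ℝ → ℝ)
    (hZ : Z = fun a => ∫ t in (0:ℝ)..r₀,
      t / (k * Real.sqrt (k ^ 2 - t ^ 2)) *
        Real.sqrt ((1 + a * k ^ 2 * (k ^ 2 - t ^ 2)) / (1 + a * (k ^ 2 - t ^ 2)))) :
    Z 0 = 1 - Real.sqrt (k ^ 2 - r₀ ^ 2) / k ∧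
    HasDerivAt Z
      (-(k ^ 2 * (1 - k ^ 2)) / 6 +
        (1 - k ^ 2) / (6 * k) * (k ^ 2 - r₀ ^ 2) ^ ((3 : ℝ) / 2)) 0 := by
  subst hZ
  have hu₀ : 0 < k^2 - r₀^2 := by nlinarith
  have huIcc : ∀ t ∈ Set.uIcc (0:ℝ) r₀, 0 < k^2 - t^2 := by
    intro t ht
    rw [Set.uIcc_of_le hr₀.le] at ht
    nlinarith [ht.1, ht.2]
  have hsqrtk : Real.sqrt (k^2) = k := Real.sqrt_sq hk.le
  have hcont : ContinuousOn (fun t : ℝ => t / (k * Real.sqrt (k^2 - t^2))) (Set.uIcc 0 r₀) := by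
    apply ContinuousOn.div continuousOn_id
    · exact (continuous_const.mul ((continuous_const.sub (continuous_pow 2)).sqrt)).continuousOn
    · intro t ht
      have := huIcc t ht
      positivity
  -- Part 1 : value at 0
  have part1 : (∫ t in (0:ℝ)..r₀,
      t / (k * Real.sqrt (k ^ 2 - t ^ 2)) *
        Real.sqrt ((1 + 0 * k ^ 2 * (k ^ 2 - t ^ 2)) / (1 + 0 * (k ^ 2 - t ^ 2))))
      = 1 - Real.sqrt (k ^ 2 - r₀ ^ 2) / k := by
    simp only [zero_mul, add_zero, div_one, Real.sqrt_one, mul_one]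
    have hderiv : ∀ t ∈ Set.uIcc (0:ℝ) r₀,
        HasDerivAt (fun s : ℝ => -(Real.sqrt (k^2 - s^2))/k)
          (t / (k * Real.sqrt (k^2 - t^2))) t := by
      intro t ht
      have hupos := huIcc t ht
      have h1 : HasDerivAt (fun s : ℝ => k^2 - s^2) (-(2*t)) t := by
        simpa using (hasDerivAt_pow 2 t).const_sub (k^2)
      have h3 := ((h1.sqrt (ne_of_gt hupos)).div_const k).neg
      convert h3 using 1 <;> try rfl
      · funext s; simp only [Pi.neg_apply]; ring
      have hs : Real.sqrt (k^2 - t^2) ≠ 0 := by positivity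
      field_simp
    rw [intervalIntegral.integral_eq_sub_of_hasDerivAt hderiv hcont.intervalIntegrable]
    have h0 : Real.sqrt (k^2 - 0^2) = k := by norm_num [hsqrtk]
    rw [h0]
    field_simp
    ring
  refine ⟨part1, ?_⟩
  -- Part 2 : derivative at 0
  set ε : ℝ := 1/(2*(1+k^2)^2) with hεdef
  have hε : 0 < ε := by positivity
  set F' : ℝ → ℝ → ℝ := fun x t =>
    t / (k * Real.sqrt (k^2 - t^2)) *
      ((k^2 * (k^2 - t^2) * (1 + x*(k^2-t^2)) - (1 + x * k^2 * (k^2-t^2)) * (k^2-t^2)) /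
          (1 + x*(k^2-t^2))^2 /
        (2 * Real.sqrt ((1 + x * k^2 * (k^2-t^2))/(1 + x*(k^2-t^2))))) with hF'def
  -- basic facts on Ι 0 r₀ and the ball
  have hIoc : Set.uIoc (0:ℝ) r₀ = Set.Ioc 0 r₀ := Set.uIoc_of_le hr₀.le
  have key := intervalIntegral.hasDerivAt_integral_of_dominated_loc_of_deriv_le
    (F := fun a t => t / (k * Real.sqrt (k ^ 2 - t ^ 2)) *
        Real.sqrt ((1 + a * k ^ 2 * (k ^ 2 - t ^ 2)) / (1 + a * (k ^ 2 - t ^ 2))))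
    (F' := F') (x₀ := (0:ℝ)) (a := (0:ℝ)) (b := r₀) (μ := volume)
    (bound := fun _ => 4 * |k^2 - 1| * r₀) (Metric.ball_mem_nhds 0 hε) ?meas ?int ?meas' ?bound ?bint ?diff
  case meas =>
    apply Filter.Eventually.of_forall
    intro x
    apply Measurable.aestronglyMeasurable
    have c1 : Continuous fun t : ℝ => k * Real.sqrt (k^2 - t^2) :=
      continuous_const.mul ((continuous_const.sub (continuous_pow 2)).sqrt)
    have c2 : Continuous fun t : ℝ => 1 + x * k ^ 2 * (k^2 - t^2) :=
      continuous_const.add (continuous_const.mul (continuous_const.sub (continuous_pow 2)))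
    have c3 : Continuous fun t : ℝ => 1 + x * (k^2 - t^2) :=
      continuous_const.add (continuous_const.mul (continuous_const.sub (continuous_pow 2)))
    exact (measurable_id.div c1.measurable).mul
      (Real.continuous_sqrt.measurable.comp (c2.measurable.div c3.measurable))
  case int =>
    apply ContinuousOn.intervalIntegrable
    simp only [zero_mul, add_zero, div_one, Real.sqrt_one, mul_one]
    exact hcont
  case meas' =>
    apply Measurable.aestronglyMeasurable
    simp only [hF'def]
    have c1 : Continuous fun t : ℝ => k * Real.sqrt (k^2 - t^2) :=
      continuous_const.mul ((continuous_const.sub (continuous_pow 2)).sqrt)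
    have c2 : Continuous fun t : ℝ => 1 + (0:ℝ) * k ^ 2 * (k^2 - t^2) :=
      continuous_const.add (continuous_const.mul (continuous_const.sub (continuous_pow 2)))
    have c3 : Continuous fun t : ℝ => 1 + (0:ℝ) * (k^2 - t^2) :=
      continuous_const.add (continuous_const.mul (continuous_const.sub (continuous_pow 2)))
    have c4 : Continuous fun t : ℝ =>
        k^2 * (k^2 - t^2) * (1 + (0:ℝ)*(k^2-t^2)) - (1 + (0:ℝ) * k^2 * (k^2-t^2)) * (k^2-t^2) := by
      continuity
    exact (measurable_id.div c1.measurable).mul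
      ((c4.measurable.div ((c3.pow 2).measurable)).div
        (measurable_const.mul
          (Real.continuous_sqrt.measurable.comp (c2.measurable.div c3.measurable))))
  case bint => exact intervalIntegrable_const
  case diff =>
    apply Filter.Eventually.of_forall
    intro t ht x hx
    rw [hIoc] at ht
    rw [Metric.mem_ball, Real.dist_eq, sub_zero] at hx
    have hu : 0 < k^2 - t^2 := by nlinarith [ht.1, ht.2]
    have huk : k^2 - t^2 ≤ k^2 := by nlinarith [ht.1]
    obtain ⟨hD1, hD2, hN1, hN2⟩ := aux_bounds k (k^2-t^2) x hk hu huk hx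
    have hDpos : 0 < 1 + x*(k^2-t^2) := by linarith
    have hNpos : 0 < 1 + x * k^2 * (k^2-t^2) := by
      have : x * k^2 * (k^2-t^2) = x * (k^2*(k^2-t^2)) := by ring
      rw [this]; linarith
    have hqpos : 0 < (1 + x * k^2 * (k^2-t^2))/(1 + x*(k^2-t^2)) := div_pos hNpos hDpos
    have hN : HasDerivAt (fun a : ℝ => 1 + a * k^2 * (k^2-t^2)) (k^2*(k^2-t^2)) x := by
      have heq : (fun a : ℝ => 1 + a * k^2 * (k^2-t^2))
          = fun a : ℝ => 1 + a * (k^2*(k^2-t^2)) := by funext a; ring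
      rw [heq]
      simpa using (((hasDerivAt_id x).mul_const (k^2*(k^2-t^2))).const_add 1)
    have hD : HasDerivAt (fun a : ℝ => 1 + a * (k^2-t^2)) (k^2-t^2) x := by
      simpa using (((hasDerivAt_id x).mul_const (k^2-t^2)).const_add 1)
    have hQ := hN.div hD (ne_of_gt hDpos)
    have hS := hQ.sqrt (ne_of_gt hqpos)
    exact hS.const_mul _
  case bound =>
    apply Filter.Eventually.of_forall
    intro t ht x hx
    rw [hIoc] at ht
    rw [Metric.mem_ball, Real.dist_eq, sub_zero] at hx
    have hu : 0 < k^2 - t^2 := by nlinarith [ht.1, ht.2]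
    have huk : k^2 - t^2 ≤ k^2 := by nlinarith [ht.1]
    obtain ⟨hD1, hD2, hN1, hN2⟩ := aux_bounds k (k^2-t^2) x hk hu huk hx
    have hDpos : 0 < 1 + x*(k^2-t^2) := by linarith
    have hNpos : 0 < 1 + x * k^2 * (k^2-t^2) := by nlinarith [hN1]
    have hq14 : (1:ℝ)/4 ≤ (1 + x * k^2 * (k^2-t^2))/(1 + x*(k^2-t^2)) := by
      rw [le_div_iff₀ hDpos]
      nlinarith [hN1, hD2]
    simp only [hF'def]
    have hs2 : Real.sqrt (k^2-t^2)^2 = k^2-t^2 := Real.sq_sqrt hu.le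
    set s := Real.sqrt (k^2-t^2) with hsdef
    have hspos : 0 < s := Real.sqrt_pos.mpr hu
    have hsk : s ≤ k := (Real.sqrt_le_sqrt huk).trans hsqrtk.le
    set Q := Real.sqrt ((1 + x * k^2 * (k^2-t^2))/(1 + x*(k^2-t^2))) with hQdef
    have hQ12 : 1/2 ≤ Q := by
      have h4 : Real.sqrt (1/4) = 1/2 := by
        rw [show (1/4:ℝ) = (1/2)^2 by norm_num, Real.sqrt_sq (by norm_num)]
      rw [hQdef, ← h4]
      exact Real.sqrt_le_sqrt hq14
    have hQpos : 0 < Q := by linarith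
    have hd0 : (1+x*s^2) ≠ 0 := by rw [hs2]; exact ne_of_gt hDpos
    rw [← hs2]
    have hE : t / (k*s) * ((k^2*s^2*(1+x*s^2) - (1+x*k^2*s^2)*s^2)/(1+x*s^2)^2 / (2*Q))
        = (k^2-1) * (t*s/(2*k*(1+x*s^2)^2*Q)) := by
      field_simp [hd0, hk.ne', hspos.ne', hQpos.ne']
      ring
    rw [Real.norm_eq_abs, hE, abs_mul]
    have hD1' : (1:ℝ)/2 ≤ 1+x*s^2 := by rw [hs2]; exact hD1
    have hd2 : (1:ℝ)/4 ≤ (1+x*s^2)^2 := by nlinarith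
    have hfrac_pos : 0 ≤ t*s/(2*k*(1+x*s^2)^2*Q) := by
      have := ht.1
      positivity
    rw [abs_of_nonneg hfrac_pos]
    have hfrac : t*s/(2*k*(1+x*s^2)^2*Q) ≤ 4*r₀ := by
      rw [div_le_iff₀ (by positivity)]
      have hts : t*s ≤ r₀*k := mul_le_mul ht.2 hsk hspos.le hr₀.le
      have hA : (1:ℝ)/8 ≤ (1+x*s^2)^2 * Q := by nlinarith
      have hB : 8*r₀*k*(1/8) ≤ 8*r₀*k*((1+x*s^2)^2*Q) :=
        mul_le_mul_of_nonneg_left hA (by positivity)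
      nlinarith
    calc |k^2-1| * (t*s/(2*k*(1+x*s^2)^2*Q)) ≤ |k^2-1| * (4*r₀) :=
          mul_le_mul_of_nonneg_left hfrac (abs_nonneg _)
      _ = 4 * |k^2-1| * r₀ := by ring
  -- conclude
  have hval : (∫ t in (0:ℝ)..r₀, F' 0 t)
      = -(k ^ 2 * (1 - k ^ 2)) / 6 +
        (1 - k ^ 2) / (6 * k) * (k ^ 2 - r₀ ^ 2) ^ ((3 : ℝ) / 2) := by
    have hsimp : ∀ t : ℝ, F' 0 t
        = t / (k * Real.sqrt (k^2 - t^2)) * ((k^2*(k^2-t^2) - (k^2-t^2))/2) := by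
      intro t
      simp [hF'def]
    simp only [hsimp]
    have hderiv : ∀ t ∈ Set.uIcc (0:ℝ) r₀,
        HasDerivAt (fun u : ℝ => -((k^2-1)/(6*k)) * ((k^2-u^2) * Real.sqrt (k^2-u^2)))
          (t / (k * Real.sqrt (k^2 - t^2)) * ((k^2*(k^2-t^2) - (k^2-t^2))/2)) t := by
      intro t ht
      have hupos := huIcc t ht
      have h1 : HasDerivAt (fun s : ℝ => k^2 - s^2) (-(2*t)) t := by
        simpa using (hasDerivAt_pow 2 t).const_sub (k^2)
      have h2 := h1.sqrt (ne_of_gt hupos)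
      have h4 := (h1.mul h2).const_mul (-((k^2-1)/(6*k)))
      convert h4 using 1 <;> try rfl
      have hs2 : Real.sqrt (k^2-t^2)^2 = k^2-t^2 := Real.sq_sqrt hupos.le
      set s := Real.sqrt (k^2-t^2) with hsdef
      have hspos : 0 < s := Real.sqrt_pos.mpr hupos
      rw [← hs2]
      field_simp [hk.ne', hspos.ne']
      ring
    have hint : IntervalIntegrable
        (fun t => t / (k * Real.sqrt (k^2 - t^2)) * ((k^2*(k^2-t^2) - (k^2-t^2))/2))
        volume 0 r₀ := by
      apply ContinuousOn.intervalIntegrable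
      exact hcont.mul (Continuous.continuousOn (by continuity))
    rw [intervalIntegral.integral_eq_sub_of_hasDerivAt hderiv hint]
    have h0 : Real.sqrt (k^2 - 0^2) = k := by norm_num [hsqrtk]
    have hr : (k^2-r₀^2:ℝ)^((3:ℝ)/2) = (k^2-r₀^2)*Real.sqrt (k^2-r₀^2) := by
      rw [show (3:ℝ)/2 = 1 + 1/2 by norm_num, Real.rpow_add hu₀, Real.rpow_one,
        ← Real.sqrt_eq_rpow]
    rw [h0, hr]
    field_simp
    ring
  have h2 := key.2
  rw [hval] at h2
  exact h2
end
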